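/- For every ordinal α < ε_{Ω+1}, ϑ(α) < Ω; that is, ϑ(α) is a countable ordinal. -/

import Mathlib

/-- `Ω`, the first uncountable ordinal `ω₁`. -/
noncomputable def Omega1 : Ordinal.{0} := (Cardinal.aleph 1).ord

/-- `KMem β α` expresses `β ∈ K(α)`, where `K(0) = {0}` and, for
`α = Ω^{α₁}·β₁ + … + Ω^{αₙ}·βₙ` in base-`Ω` Cantor normal form,
`K(α) = {β₁,…,βₙ} ∪ K(α₁) ∪ … ∪ K(αₙ)`. -/
inductive KMem : Ordinal.{0} → Ordinal.{0} → Prop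
  | zero : KMem 0 0
  | coeff {α e c : Ordinal.{0}} : (e, c) ∈ Ordinal.CNF Omega1 α → KMem c α
  | expo {α e c β : Ordinal.{0}} : (e, c) ∈ Ordinal.CNF Omega1 α → KMem β e → KMem β α

/-- `k(α) = max K(α)` (as a supremum; `K(α)` is finite for `α < ε_{Ω+1}`). -/
noncomputable def kMax (α : Ordinal.{0}) : Ordinal.{0} := sSup {β | KMem β α}

/-- Membership in `P`, the class of additively closed ordinals `{ω^ξ : ξ ∈ On}`. -/
def AddClosed (ζ : Ordinal.{0}) : Prop := ∃ ξ : Ordinal.{0}, ζ = Ordinal.omega0 ^ ξ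

/-- The collapsing function `ϑ`: `ϑ(α)` is the least `ζ ∈ P` such that `k(α) < ζ` and
for all `β < α` with `k(β) < ζ` one has `ϑ(β) < ζ`. -/
noncomputable def theta : Ordinal.{0} → Ordinal.{0} :=
  Ordinal.lt_wf.fix (C := fun _ => Ordinal.{0}) fun α IH =>
    sInf {ζ : Ordinal.{0} | AddClosed ζ ∧ kMax α < ζ ∧
      ∀ (β : Ordinal.{0}) (h : β < α), kMax β < ζ → IH β h < ζ}

/-- `ε_{Ω+1}`, the least epsilon number above `Ω`. -/
noncomputable def epsOmega1 : Ordinal.{0} :=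
  Ordinal.nfp (fun a => Ordinal.omega0 ^ a) (Omega1 + 1)

/-- The tower `Ω_n[1]`: `Ω_0[1] = 1` and `Ω_{n+1}[1] = Ω ^ Ω_n[1]`. -/
noncomputable def OmegaTower : ℕ → Ordinal.{0}
  | 0 => 1
  | nn + 1 => Omega1 ^ OmegaTower nn

/-- The Howard–Bachmann ordinal `ϑ(ε_{Ω+1}) = sup_{n<ω} ϑ(Ω_n[1])`. -/
noncomputable def HowardBachmann : Ordinal.{0} := ⨆ nn : ℕ, theta (OmegaTower nn)

open Ordinal Cardinal Set

lemma omega0_le_Omega1 : ω ≤ Omega1 := by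
  rw [Omega1, ← Cardinal.ord_aleph0]
  exact Cardinal.ord_le_ord.2 Cardinal.aleph0_lt_aleph_one.le

lemma one_lt_Omega1 : 1 < Omega1 := Ordinal.one_lt_omega0.trans_le omega0_le_Omega1

lemma Omega1_pos : 0 < Omega1 := lt_trans zero_lt_one one_lt_Omega1

lemma Omega1_isLimit : Order.IsSuccLimit Omega1 := Cardinal.isSuccLimit_ord (Cardinal.aleph0_le_aleph 1)

lemma opow_lt_Omega1 {ξ : Ordinal.{0}} (h : ξ < Omega1) : ω ^ ξ < Omega1 := by
  induction ξ using Ordinal.limitRecOn with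
  | zero => simpa using one_lt_Omega1
  | add_one ξ IH =>
    have hξ : ξ < Omega1 := (Order.lt_succ ξ).trans h
    rw [opow_add_one, Omega1, Cardinal.lt_ord, Ordinal.card_mul, Ordinal.card_omega0]
    have h1 : (ω ^ ξ).card ≤ ℵ₀ := by
      have := Cardinal.lt_ord.1 (show ω ^ ξ < Omega1 from IH hξ)
      rwa [← Cardinal.succ_aleph0, Order.lt_succ_iff] at this
    calc (ω ^ ξ).card * ℵ₀ ≤ ℵ₀ * ℵ₀ := mul_le_mul' h1 le_rfl
      _ = ℵ₀ := Cardinal.aleph0_mul_aleph0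
      _ < ℵ₁ := Cardinal.aleph0_lt_aleph_one
  | limit ξ hlim IH =>
    rw [← Ordinal.IsNormal.bsup_eq (Ordinal.isNormal_opow Ordinal.one_lt_omega0) hlim]
    refine Cardinal.bsup_lt_ord_of_isRegular Cardinal.isRegular_aleph_one ?_ ?_
    · exact Cardinal.lt_ord.1 h
    · exact fun i hi => IH i hi (hi.trans h)

lemma csSup_lt_Omega1 {s : Set Ordinal.{0}} (hc : s.Countable)
    (hb : ∀ x ∈ s, x < Omega1) : sSup s < Omega1 := by
  rcases s.eq_empty_or_nonempty with rfl | hne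
  · simpa [csSup_empty] using Omega1_pos
  · obtain ⟨f, rfl⟩ := hc.exists_eq_range hne
    have : sSup (Set.range f) = ⨆ n, f n := rfl
    rw [this]
    exact Cardinal.iSup_lt_ord_of_isRegular Cardinal.isRegular_aleph_one
      (by simpa using Cardinal.aleph0_lt_aleph_one)
      (fun n => hb _ (Set.mem_range_self n))

lemma iSup_nat_lt_Omega1 {f : ℕ → Ordinal.{0}} (hb : ∀ n, f n < Omega1) :
    (⨆ n, f n) < Omega1 :=
  Cardinal.iSup_lt_ord_of_isRegular Cardinal.isRegular_aleph_one
    (by simpa using Cardinal.aleph0_lt_aleph_one) hb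

lemma theta_def (α : Ordinal.{0}) : theta α = sInf {ζ : Ordinal.{0} | AddClosed ζ ∧ kMax α < ζ ∧
    ∀ (β : Ordinal.{0}) (_ : β < α), kMax β < ζ → theta β < ζ} := by
  conv_lhs => rw [theta]
  rw [WellFounded.fix_eq]
  rfl

lemma log_lt_self_of_lt_eps {β : Ordinal.{0}} (h0 : β ≠ 0) (hβ : β < epsOmega1) :
    Ordinal.log Omega1 β < β := by
  rw [← Ordinal.lt_opow_iff_log_lt one_lt_Omega1 h0]
  by_contra hc
  push_neg at hc
  set κ := Ordinal.nfp (fun a => Omega1 ^ a) 0 with hκdef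
  have hnorm : Order.IsNormal (fun a : Ordinal.{0} => Omega1 ^ a) := Ordinal.isNormal_opow one_lt_Omega1
  have hκβ : κ ≤ β := Ordinal.nfp_le_fp hnorm.monotone (show (0 : Ordinal) ≤ β from zero_le) hc
  have hfix : Omega1 ^ κ = κ := Ordinal.nfp_fp hnorm 0
  have hκ1 : 1 ≤ κ := by
    have := Ordinal.iterate_le_nfp (fun a => Omega1 ^ a) 0 1
    simpa using this
  have hΩκ : Omega1 ≤ κ := by
    calc Omega1 = Omega1 ^ (1 : Ordinal) := (opow_one _).symm
      _ ≤ Omega1 ^ κ := Ordinal.opow_le_opow_right Omega1_pos hκ1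
      _ = κ := hfix
  have hΩltκ : Omega1 < κ := by
    rcases hΩκ.lt_or_eq with h | h
    · exact h
    · exfalso
      have h2 : Omega1 ^ (1 : Ordinal) < Omega1 ^ κ := by
        rw [Ordinal.opow_lt_opow_iff_right one_lt_Omega1]
        exact lt_of_lt_of_le one_lt_Omega1 hΩκ
      rw [opow_one, hfix, ← h] at h2
      exact lt_irrefl _ h2
  have heps : epsOmega1 ≤ κ := by
    rw [epsOmega1]
    refine Ordinal.nfp_le_fp (Ordinal.isNormal_opow Ordinal.one_lt_omega0).monotone ?_ ?_
    · rw [Ordinal.add_one_eq_succ, Order.succ_le_iff]; exact hΩltκ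
    · calc ω ^ κ ≤ Omega1 ^ κ := Ordinal.opow_le_opow_left κ omega0_le_Omega1
        _ = κ := hfix
  exact absurd hβ (not_lt.2 (heps.trans hκβ))

lemma kmem_zero {β : Ordinal.{0}} : KMem β 0 ↔ β = 0 := by
  constructor
  · intro h
    cases h with
    | zero => rfl
    | coeff hmem => simp [Ordinal.CNF.zero_right] at hmem
    | expo hmem hk => simp [Ordinal.CNF.zero_right] at hmem
  · rintro rfl; exact KMem.zero

lemma kmem_iff {β α : Ordinal.{0}} (h0 : α ≠ 0) :
    KMem β α ↔ ∃ p ∈ Ordinal.CNF Omega1 α, p.2 = β ∨ KMem β p.1 := by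
  constructor
  · intro h
    cases h with
    | zero => exact absurd rfl h0
    | coeff hmem => exact ⟨_, hmem, Or.inl rfl⟩
    | expo hmem hk => exact ⟨_, hmem, Or.inr hk⟩
  · rintro ⟨⟨e, c⟩, hp, rfl | hk⟩
    · exact KMem.coeff hp
    · exact KMem.expo hp hk

lemma cnf_fst_lt {α : Ordinal.{0}} (hα : α < epsOmega1) {p : Ordinal × Ordinal}
    (hp : p ∈ Ordinal.CNF Omega1 α) : p.1 < α := by
  have h0 : α ≠ 0 := by rintro rfl; simp [Ordinal.CNF.zero_right] at hp
  exact (Ordinal.CNF.fst_le_log hp).trans_lt (log_lt_self_of_lt_eps h0 hα)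

lemma K_fin : ∀ α : Ordinal.{0}, α < epsOmega1 →
    {β | KMem β α}.Finite ∧ ∀ β, KMem β α → β < Omega1 := by
  intro α
  induction α using Ordinal.induction with
  | _ α IH =>
    intro hα
    rcases eq_or_ne α 0 with rfl | h0
    · have hset : {β | KMem β (0 : Ordinal.{0})} = {0} := by
        ext β; simpa using kmem_zero
      rw [hset]
      exact ⟨Set.finite_singleton 0, fun β hβ => by
        rw [kmem_zero.1 hβ]; exact Omega1_pos⟩
    · have hset : {β | KMem β α} =
          ⋃ p ∈ {q | q ∈ Ordinal.CNF Omega1 α}, ({p.2} ∪ {β | KMem β p.1}) := by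
        ext β
        simp only [Set.mem_setOf_eq, Set.mem_iUnion, Set.mem_union, Set.mem_singleton_iff]
        rw [kmem_iff h0]
        constructor
        · rintro ⟨p, hp, h | h⟩
          · exact ⟨p, hp, Or.inl h.symm⟩
          · exact ⟨p, hp, Or.inr h⟩
        · rintro ⟨p, hp, h | h⟩
          · exact ⟨p, hp, Or.inl h.symm⟩
          · exact ⟨p, hp, Or.inr h⟩
      constructor
      · rw [hset]
        refine Set.Finite.biUnion (Ordinal.CNF Omega1 α).finite_toSet ?_
        intro p hp
        have hlt : p.1 < α := cnf_fst_lt hα hp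
        exact (Set.finite_singleton _).union (IH p.1 hlt (hlt.trans hα)).1
      · intro β hβ
        rw [kmem_iff h0] at hβ
        obtain ⟨p, hp, h | h⟩ := hβ
        · rw [← h]; exact Ordinal.CNF.snd_lt one_lt_Omega1 hp
        · have hlt : p.1 < α := cnf_fst_lt hα hp
          exact (IH p.1 hlt (hlt.trans hα)).2 β h

lemma kmem_le_kMax {α β : Ordinal.{0}} (hα : α < epsOmega1) (h : KMem β α) : β ≤ kMax α :=
  le_csSup (K_fin α hα).1.bddAbove h

lemma kMax_lt_Omega1 {α : Ordinal.{0}} (hα : α < epsOmega1) : kMax α < Omega1 := by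
  rcases Set.eq_empty_or_nonempty {β | KMem β α} with he | hne
  · rw [kMax, he]; simpa [csSup_empty] using Omega1_pos
  · exact (K_fin α hα).2 _ (hne.csSup_mem (K_fin α hα).1)

noncomputable def encK (g : Ordinal.{0} → ℕ) : Ordinal.{0} → ℕ :=
  Ordinal.lt_wf.fix (C := fun _ => ℕ) fun β IH =>
    Encodable.encode ((Ordinal.CNF Omega1 β).map fun p =>
      (if h : p.1 < β then IH p.1 h else 0, g p.2))

lemma encK_eq (g : Ordinal.{0} → ℕ) {β : Ordinal.{0}} (hβ : β < epsOmega1) :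
    encK g β = Encodable.encode ((Ordinal.CNF Omega1 β).map fun p => (encK g p.1, g p.2)) := by
  conv_lhs => rw [encK]
  rw [WellFounded.fix_eq]
  congr 1
  apply List.map_congr_left
  intro p hp
  have hlt : p.1 < β := cnf_fst_lt hβ hp
  rw [dif_pos hlt]
  rfl

lemma list_eq_of_map_eq {α β : Type*} (f : α → β) : ∀ (L L' : List α), L.map f = L'.map f →
    (∀ a ∈ L, ∀ b ∈ L', f a = f b → a = b) → L = L' := by
  intro L
  induction L with
  | nil =>
    intro L' h _
    cases L' with
    | nil => rfl
    | cons b t' => simp at h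
  | cons a t ih =>
    intro L' h hinj
    cases L' with
    | nil => simp at h
    | cons b t' =>
      simp only [List.map_cons, List.cons.injEq] at h
      obtain ⟨h1, h2⟩ := h
      have hab : a = b := hinj a List.mem_cons_self b List.mem_cons_self h1
      subst hab
      rw [ih t' h2 fun x hx y hy => hinj x (List.mem_cons_of_mem _ hx) y (List.mem_cons_of_mem _ hy)]

lemma encK_injOn (g : Ordinal.{0} → ℕ) (ζ : Ordinal.{0}) (hg : Set.InjOn g (Set.Iio ζ)) :
    ∀ β : Ordinal.{0}, β < epsOmega1 → (∀ x, KMem x β → x < ζ) →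
    ∀ β' : Ordinal.{0}, β' < epsOmega1 → (∀ x, KMem x β' → x < ζ) →
    encK g β = encK g β' → β = β' := by
  intro β
  induction β using Ordinal.induction with
  | _ β IH =>
    intro hβe hβK β' hβ'e hβ'K henc
    rw [encK_eq g hβe, encK_eq g hβ'e] at henc
    have hlist := Encodable.encode_injective henc
    have hCNF : Ordinal.CNF Omega1 β = Ordinal.CNF Omega1 β' := by
      refine list_eq_of_map_eq _ _ _ hlist ?_
      intro p hp q hq hfpq
      rw [Prod.mk.injEq] at hfpq
      obtain ⟨h1, h2⟩ := hfpq
      have hpβ : p.1 < β := cnf_fst_lt hβe hp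
      have hqβ' : q.1 < β' := cnf_fst_lt hβ'e hq
      have hpK : ∀ x, KMem x p.1 → x < ζ := fun x hx => hβK x (KMem.expo (by simpa using hp) hx)
      have hqK : ∀ x, KMem x q.1 → x < ζ := fun x hx => hβ'K x (KMem.expo (by simpa using hq) hx)
      have he : p.1 = q.1 :=
        IH p.1 hpβ (hpβ.trans hβe) hpK q.1 (hqβ'.trans hβ'e) hqK h1
      have hc : p.2 = q.2 :=
        hg (hβK p.2 (KMem.coeff (by simpa using hp)))
           (hβ'K q.2 (KMem.coeff (by simpa using hq))) h2
      exact Prod.ext he hc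
    have h1 := Ordinal.CNF.foldr Omega1 β
    have h2 := Ordinal.CNF.foldr Omega1 β'
    rw [hCNF] at h1
    exact h1.symm.trans h2

lemma countable_K_bounded {ζ : Ordinal.{0}} (hζ : ζ < Omega1) :
    {β : Ordinal.{0} | β < epsOmega1 ∧ ∀ x, KMem x β → x < ζ}.Countable := by
  obtain ⟨g, hg⟩ : ∃ g : Ordinal.{0} → ℕ, Set.InjOn g (Set.Iio ζ) := by
    have hcnt : (Set.Iio ζ).Countable := by
      rw [← Set.countable_coe_iff, ← Cardinal.mk_le_aleph0_iff, Ordinal.mk_Iio_ordinal]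
      have hcard : ζ.card ≤ ℵ₀ := by
        have := Cardinal.lt_ord.1 hζ
        rwa [← Cardinal.succ_aleph0, Order.lt_succ_iff] at this
      calc Cardinal.lift.{1} ζ.card ≤ Cardinal.lift.{1} ℵ₀ := Cardinal.lift_le.2 hcard
        _ = ℵ₀ := Cardinal.lift_aleph0
    exact Set.countable_iff_exists_injOn.1 hcnt
  rw [Set.countable_iff_exists_injOn]
  exact ⟨encK g, fun β hβ β' hβ' h => encK_injOn g ζ hg β hβ.1 hβ.2 β' hβ'.1 hβ'.2 h⟩

lemma theta_lt_Omega1 : ∀ α : Ordinal.{0}, α < epsOmega1 → theta α < Omega1 := by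
  intro α
  induction α using Ordinal.induction with
  | _ α IH =>
    intro hα
    set B : Ordinal.{0} → Set Ordinal.{0} :=
      fun z => insert z (theta '' {β | β < α ∧ kMax β < z}) with hB
    have hBbd : ∀ z, z < Omega1 → ∀ x ∈ B z, x < Omega1 := by
      intro z hz x hx
      rcases hx with rfl | ⟨β, ⟨hβα, _⟩, rfl⟩
      · exact hz
      · exact IH β hβα (hβα.trans hα)
    have hBcnt : ∀ z, z < Omega1 → (B z).Countable := by
      intro z hz
      refine Set.Countable.insert z (Set.Countable.image ?_ theta)
      refine (countable_K_bounded hz).mono ?_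
      rintro β ⟨hβα, hkβ⟩
      exact ⟨hβα.trans hα, fun x hx => (kmem_le_kMax (hβα.trans hα) hx).trans_lt hkβ⟩
    let u : ℕ → Ordinal.{0} := fun n => Nat.rec (kMax α + 1) (fun _ ξ => sSup (B (ω ^ ξ)) + 1) n
    have hu0 : u 0 = kMax α + 1 := rfl
    have husucc : ∀ n, u (n + 1) = sSup (B (ω ^ u n)) + 1 := fun n => rfl
    have huΩ : ∀ n, u n < Omega1 := by
      intro n
      induction n with
      | zero =>
        rw [hu0, Ordinal.add_one_eq_succ]
        exact Omega1_isLimit.succ_lt (kMax_lt_Omega1 hα)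
      | succ n ihn =>
        rw [husucc, Ordinal.add_one_eq_succ]
        have hz : ω ^ u n < Omega1 := opow_lt_Omega1 ihn
        exact Omega1_isLimit.succ_lt (csSup_lt_Omega1 (hBcnt _ hz) (hBbd _ hz))
    have hξΩ : (⨆ n, u n) < Omega1 := iSup_nat_lt_Omega1 huΩ
    set ξ := ⨆ n, u n with hξ
    have hζΩ : ω ^ ξ < Omega1 := opow_lt_Omega1 hξΩ
    have hule : ∀ n, u n ≤ ξ := fun n => le_ciSup (Ordinal.bddAbove_range u) n
    have hmem : AddClosed (ω ^ ξ) ∧ kMax α < ω ^ ξ ∧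
        ∀ (β : Ordinal.{0}) (_ : β < α), kMax β < ω ^ ξ → theta β < ω ^ ξ := by
      refine ⟨⟨ξ, rfl⟩, ?_, ?_⟩
      · calc kMax α < u 0 := by rw [hu0, Ordinal.add_one_eq_succ]; exact Order.lt_succ _
          _ ≤ ξ := hule 0
          _ ≤ ω ^ ξ := Ordinal.right_le_opow ξ Ordinal.one_lt_omega0
      · intro β hβα hkβ
        have hsup : ω ^ ξ = ⨆ n, ω ^ u n :=
          (Ordinal.isNormal_opow Ordinal.one_lt_omega0).map_iSup (Ordinal.bddAbove_range u)
        rw [hsup] at hkβ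
        obtain ⟨n, hn⟩ := Ordinal.lt_iSup_iff.1 hkβ
        have hthetab : theta β ≤ sSup (B (ω ^ u n)) := by
          refine le_csSup ⟨Omega1, fun x hx => (hBbd _ (opow_lt_Omega1 (huΩ n)) x hx).le⟩ ?_
          exact Set.mem_insert_of_mem _ ⟨β, ⟨hβα, hn⟩, rfl⟩
        calc theta β ≤ sSup (B (ω ^ u n)) := hthetab
          _ < u (n + 1) := by rw [husucc, Ordinal.add_one_eq_succ]; exact Order.lt_succ _
          _ ≤ ξ := hule (n + 1)
          _ ≤ ω ^ ξ := Ordinal.right_le_opow ξ Ordinal.one_lt_omega0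
    rw [theta_def]
    have hin : (ω ^ ξ) ∈ {ζ : Ordinal.{0} | AddClosed ζ ∧ kMax α < ζ ∧
        ∀ (β : Ordinal.{0}) (_ : β < α), kMax β < ζ → theta β < ζ} := hmem
    exact (csInf_le' hin).trans_lt hζΩ

/-- `ϑ(α)` is always a countable ordinal, i.e. `ϑ(α) < Ω`. -/
theorem stmt8 (α : Ordinal.{0}) (hα : α < epsOmega1) : theta α < Omega1 :=
  theta_lt_Omega1 α hα
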